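/- Let a ∈ ℝⁿ with a ≥ 0 entrywise and let B be an entrywise nonnegative n×n×n tensor. Suppose x = a + Bx² has a nonnegative solution, and that its minimal nonnegative solution m satisfies m > 0 entrywise. Define F(x) = a + Bx² − x and R_x = I − Bx: − B:x, and consider the Newton iteration x_0 = 0, x_{k+1} = x_k + R_{x_k}⁻¹F(x_k). Then the iteration is well defined (each R_{x_k} is invertible with R_{x_k}⁻¹ ≥ 0 entrywise), F(x_k) ≥ 0 entrywise for every k, the iterates satisfy 0 = x_0 ≤ x_1 ≤ x_2 ≤ ⋯ ≤ m entrywise, and x_k converges to m. -/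
import Mathlib


open Matrix

/-- `(tapp B x y) i = Σ_{j,k} B i j k * x j * y k`, the tensor–vector–vector product. -/
def tapp {n : ℕ} (B : Fin n → Fin n → Fin n → ℝ) (x y : Fin n → ℝ) : Fin n → ℝ :=
  fun i => ∑ j, ∑ k, B i j k * x j * y k

/-- The matrix `Bx:`, satisfying `(Bx:) h = B x h`; `(Bx:)_{ij} = Σ_k b_{ikj} x_k`. -/
def matL {n : ℕ} (B : Fin n → Fin n → Fin n → ℝ) (x : Fin n → ℝ) :
    Matrix (Fin n) (Fin n) ℝ :=
  Matrix.of fun i j => ∑ k, B i k j * x k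

/-- The matrix `B:x`, satisfying `(B:x) h = B h x`; `(B:x)_{ij} = Σ_k b_{ijk} x_k`. -/
def matR {n : ℕ} (B : Fin n → Fin n → Fin n → ℝ) (x : Fin n → ℝ) :
    Matrix (Fin n) (Fin n) ℝ :=
  Matrix.of fun i j => ∑ k, B i j k * x k

/-- `R_x = I − Bx: − B:x`, the negative Jacobian of `x ↦ a + Bx² − x`. -/
def Rmat {n : ℕ} (B : Fin n → Fin n → Fin n → ℝ) (x : Fin n → ℝ) :
    Matrix (Fin n) (Fin n) ℝ :=
  1 - matL B x - matR B x

open Filter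

section NewtonAux
variable {n : ℕ}

lemma mulVec_apply' (M : Matrix (Fin n) (Fin n) ℝ) (v : Fin n → ℝ) (i : Fin n) :
    (M *ᵥ v) i = ∑ j, M i j * v j := rfl

lemma mulVec_nonneg' {M : Matrix (Fin n) (Fin n) ℝ} (hM : ∀ i j, 0 ≤ M i j)
    {v : Fin n → ℝ} (hv : ∀ i, 0 ≤ v i) (i : Fin n) : 0 ≤ (M *ᵥ v) i := by
  rw [mulVec_apply']
  exact Finset.sum_nonneg fun j _ => mul_nonneg (hM i j) (hv j)

lemma matL_mulVec (B : Fin n → Fin n → Fin n → ℝ) (y w : Fin n → ℝ) :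
    matL B y *ᵥ w = tapp B y w := by
  funext i
  simp only [matL, mulVec, dotProduct, tapp, of_apply, Finset.sum_mul]
  rw [Finset.sum_comm]

lemma matR_mulVec (B : Fin n → Fin n → Fin n → ℝ) (y w : Fin n → ℝ) :
    matR B y *ᵥ w = tapp B w y := by
  funext i
  simp only [matR, mulVec, dotProduct, tapp, of_apply, Finset.sum_mul]
  exact Finset.sum_congr rfl fun j _ => Finset.sum_congr rfl fun k _ => by ring

lemma tapp_add_left (B : Fin n → Fin n → Fin n → ℝ) (u v w : Fin n → ℝ) :
    tapp B (u + v) w = tapp B u w + tapp B v w := by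
  funext i
  simp only [tapp, Pi.add_apply, ← Finset.sum_add_distrib]
  exact Finset.sum_congr rfl fun j _ => Finset.sum_congr rfl fun k _ => by ring

lemma tapp_add_right (B : Fin n → Fin n → Fin n → ℝ) (u v w : Fin n → ℝ) :
    tapp B w (u + v) = tapp B w u + tapp B w v := by
  funext i
  simp only [tapp, Pi.add_apply, ← Finset.sum_add_distrib]
  exact Finset.sum_congr rfl fun j _ => Finset.sum_congr rfl fun k _ => by ring

lemma tapp_sub_left (B : Fin n → Fin n → Fin n → ℝ) (u v w : Fin n → ℝ) :
    tapp B (u - v) w = tapp B u w - tapp B v w := by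
  funext i
  simp only [tapp, Pi.sub_apply, ← Finset.sum_sub_distrib]
  exact Finset.sum_congr rfl fun j _ => Finset.sum_congr rfl fun k _ => by ring

lemma tapp_sub_right (B : Fin n → Fin n → Fin n → ℝ) (u v w : Fin n → ℝ) :
    tapp B w (u - v) = tapp B w u - tapp B w v := by
  funext i
  simp only [tapp, Pi.sub_apply, ← Finset.sum_sub_distrib]
  exact Finset.sum_congr rfl fun j _ => Finset.sum_congr rfl fun k _ => by ring

lemma Rmat_eq (B : Fin n → Fin n → Fin n → ℝ) (y : Fin n → ℝ) :
    Rmat B y = 1 - (matL B y + matR B y) := by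
  rw [Rmat, sub_sub]

lemma Nmat_nonneg {B : Fin n → Fin n → Fin n → ℝ} (hB : ∀ i j k, 0 ≤ B i j k)
    {y : Fin n → ℝ} (hy : ∀ i, 0 ≤ y i) (i j : Fin n) :
    0 ≤ (matL B y + matR B y) i j := by
  have h1 : 0 ≤ matL B y i j := by
    show 0 ≤ ∑ k, B i k j * y k
    exact Finset.sum_nonneg fun k _ => mul_nonneg (hB i k j) (hy k)
  have h2 : 0 ≤ matR B y i j := by
    show 0 ≤ ∑ k, B i j k * y k
    exact Finset.sum_nonneg fun k _ => mul_nonneg (hB i j k) (hy k)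
  exact add_nonneg h1 h2

lemma Nmat_mulVec (B : Fin n → Fin n → Fin n → ℝ) (y w : Fin n → ℝ) :
    (matL B y + matR B y) *ᵥ w = tapp B y w + tapp B w y := by
  rw [add_mulVec, matL_mulVec, matR_mulVec]

lemma id1 {a B m : _} (hmsol : m = a + tapp B m m) (y : Fin n → ℝ) :
    Rmat B y *ᵥ (m - y) = (a + tapp B y y - y) + tapp B (m - y) (m - y) := by
  have hA : a = m - tapp B m m := eq_sub_of_add_eq (by rw [← hmsol])
  rw [Rmat_eq, sub_mulVec, one_mulVec, Nmat_mulVec]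
  simp only [tapp_sub_left, tapp_sub_right, hA]
  abel

lemma id2 {a : Fin n → ℝ} (B : Fin n → Fin n → Fin n → ℝ) (x δ : Fin n → ℝ) :
    a + tapp B (x + δ) (x + δ) - (x + δ)
      = (a + tapp B x x - x) - Rmat B x *ᵥ δ + tapp B δ δ := by
  rw [Rmat_eq, sub_mulVec, one_mulVec, Nmat_mulVec]
  simp only [tapp_add_left, tapp_add_right]
  abel

lemma id3 {a B m : _} (hmsol : m = a + tapp B m m) (y : Fin n → ℝ) :
    Rmat B m *ᵥ (m - y) = (a + tapp B y y - y) - tapp B (m - y) (m - y) := by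
  have hA : a = m - tapp B m m := eq_sub_of_add_eq (by rw [← hmsol])
  rw [Rmat_eq, sub_mulVec, one_mulVec, Nmat_mulVec]
  simp only [tapp_sub_left, tapp_sub_right, hA]
  abel

lemma double_sum_zero {g : Fin n → Fin n → ℝ} (hg : ∀ j l, 0 ≤ g j l)
    (h : (∑ j, ∑ l, g j l) = 0) : ∀ j l, g j l = 0 := by
  intro j l
  have h1 : ∀ j' ∈ Finset.univ, (0:ℝ) ≤ ∑ l', g j' l' :=
    fun j' _ => Finset.sum_nonneg fun l' _ => hg j' l'
  have h2 := (Finset.sum_eq_zero_iff_of_nonneg h1).1 h j (Finset.mem_univ j)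
  have h3 : ∀ l' ∈ Finset.univ, (0:ℝ) ≤ g j l' := fun l' _ => hg j l'
  exact (Finset.sum_eq_zero_iff_of_nonneg h3).1 h2 l (Finset.mem_univ l)

lemma single_sum_zero {g : Fin n → ℝ} (hg : ∀ j, 0 ≤ g j)
    (h : (∑ j, g j) = 0) : ∀ j, g j = 0 := by
  intro j
  exact (Finset.sum_eq_zero_iff_of_nonneg fun j' _ => hg j').1 h j (Finset.mem_univ j)

/-- Facts about indices where a subsolution touches `m`. -/
lemma zfacts {a B m : _} (ha : ∀ i, 0 ≤ a i) (hB : ∀ i j k, 0 ≤ B i j k)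
    (hmpos : ∀ i, 0 < m i) (hmsol : m = a + tapp B m m)
    {w : Fin n → ℝ} (hw0 : ∀ i : Fin n, 0 ≤ w i) (hwm : ∀ i, w i ≤ m i)
    (hF : ∀ i, 0 ≤ (a + tapp B w w - w) i) :
    ∀ i, w i = m i →
      (a + tapp B w w - w) i = 0 ∧ tapp B (m - w) (m - w) i = 0 ∧
      (∀ j, (matL B w + matR B w) i j ≠ 0 → w j = m j) ∧
      (∀ j l, B i j l ≠ 0 → w j = m j ∧ w l = m l) := by
  intro i hi
  have hid := congrFun (id1 hmsol w) i
  have hRw : Rmat B w *ᵥ (m - w) = (m - w) - (matL B w + matR B w) *ᵥ (m - w) := by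
    rw [Rmat_eq, sub_mulVec, one_mulVec]
  rw [hRw] at hid
  have hdnn : ∀ j, 0 ≤ (m - w) j := fun j => by
    simp only [Pi.sub_apply]; linarith [hwm j]
  have hNd : 0 ≤ ((matL B w + matR B w) *ᵥ (m - w)) i :=
    mulVec_nonneg' (Nmat_nonneg hB hw0) hdnn i
  have hdz : (m - w) i = 0 := by simp [Pi.sub_apply, hi]
  have htnn : 0 ≤ tapp B (m - w) (m - w) i := by
    apply Finset.sum_nonneg; intro j _; apply Finset.sum_nonneg; intro l _
    exact mul_nonneg (mul_nonneg (hB i j l) (hdnn j)) (hdnn l)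
  simp only [Pi.sub_apply, Pi.add_apply] at hid hdz
  have hF0 : (a + tapp B w w - w) i = 0 := by
    simp only [Pi.sub_apply, Pi.add_apply] at hF ⊢
    have := hF i
    linarith
  have htz : tapp B (m - w) (m - w) i = 0 := by
    simp only [Pi.sub_apply, Pi.add_apply] at hF
    have := hF i
    linarith
  have hNdz : ((matL B w + matR B w) *ᵥ (m - w)) i = 0 := by
    simp only [Pi.sub_apply, Pi.add_apply] at hF
    have := hF i
    linarith
  refine ⟨hF0, htz, ?_, ?_⟩
  · intro j hNij
    rw [mulVec_apply'] at hNdz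
    have := single_sum_zero
      (fun j' => mul_nonneg (Nmat_nonneg hB hw0 i j') (hdnn j')) hNdz j
    have hNnn := Nmat_nonneg hB hw0 i j
    have hdj := hdnn j
    rcases mul_eq_zero.1 this with h | h
    · exact absurd h hNij
    · have : w j = m j := by simp only [Pi.sub_apply] at h; linarith
      exact this
  · intro j l hBijl
    -- from F i = 0 : tapp B w w i = tapp B m m i
    have hmi := congrFun hmsol i
    simp only [Pi.add_apply] at hmi
    have htww : tapp B w w i = tapp B m m i := by
      simp only [Pi.sub_apply, Pi.add_apply] at hF0
      linarith [hF0, hi, hmi]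
    have hsum : (∑ j', ∑ l', (B i j' l' * m j' * m l' - B i j' l' * w j' * w l')) = 0 := by
      have hd : tapp B m m i - tapp B w w i = 0 := by linarith
      simp only [tapp] at hd
      calc (∑ j', ∑ l', (B i j' l' * m j' * m l' - B i j' l' * w j' * w l'))
          = (∑ j', ∑ l', B i j' l' * m j' * m l')
            - ∑ j', ∑ l', B i j' l' * w j' * w l' := by
            rw [← Finset.sum_sub_distrib]
            exact Finset.sum_congr rfl fun j' _ => by rw [Finset.sum_sub_distrib]
        _ = 0 := hd
    have hterm := double_sum_zero
      (g := fun j' l' => B i j' l' * m j' * m l' - B i j' l' * w j' * w l')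
      (fun j' l' => by
        have h1 : B i j' l' * w j' ≤ B i j' l' * m j' :=
          mul_le_mul_of_nonneg_left (hwm j') (hB i j' l')
        have h2 : B i j' l' * w j' * w l' ≤ B i j' l' * m j' * m l' :=
          mul_le_mul h1 (hwm l') (hw0 l')
            (mul_nonneg (hB _ _ _) (le_trans (hw0 j') (hwm j')))
        show (0:ℝ) ≤ B i j' l' * m j' * m l' - B i j' l' * w j' * w l'
        linarith) hsum j l
    have hBpos : 0 < B i j l := lt_of_le_of_ne (hB i j l) (Ne.symm hBijl)
    constructor
    · by_contra hne
      have hjlt : w j < m j := lt_of_le_of_ne (hwm j) hne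
      have c1 : B i j l * w j * w l ≤ B i j l * w j * m l :=
        mul_le_mul_of_nonneg_left (hwm l) (mul_nonneg (hB i j l) (hw0 j))
      have c2 : B i j l * w j * m l < B i j l * m j * m l := by
        apply mul_lt_mul_of_pos_right _ (hmpos l)
        exact mul_lt_mul_of_pos_left hjlt hBpos
      have hterm' : B i j l * m j * m l - B i j l * w j * w l = 0 := hterm
      linarith
    · by_contra hne
      have hllt : w l < m l := lt_of_le_of_ne (hwm l) hne
      have c1 : B i j l * w j * w l ≤ B i j l * m j * w l :=
        mul_le_mul_of_nonneg_right
          (mul_le_mul_of_nonneg_left (hwm j) (hB i j l)) (hw0 l)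
      have c2 : B i j l * m j * w l < B i j l * m j * m l :=
        mul_lt_mul_of_pos_left hllt (mul_pos hBpos (hmpos j))
      have hterm' : B i j l * m j * m l - B i j l * w j * w l = 0 := hterm
      linarith


lemma mulVec_mono' {M : Matrix (Fin n) (Fin n) ℝ} (hM : ∀ i j, 0 ≤ M i j)
    {v w : Fin n → ℝ} (hvw : ∀ i, v i ≤ w i) (i : Fin n) : (M *ᵥ v) i ≤ (M *ᵥ w) i := by
  rw [mulVec_apply', mulVec_apply']
  exact Finset.sum_le_sum fun j _ => mul_le_mul_of_nonneg_left (hvw j) (hM i j)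


lemma le_zero_of_subinv {A : Matrix (Fin n) (Fin n) ℝ} (hA : ∀ i j, 0 ≤ A i j)
    {u : Fin n → ℝ} (hu0 : ∀ i, 0 ≤ u i) (hu : ∀ i, (A *ᵥ u) i + 1 ≤ u i)
    {z : Fin n → ℝ} (hz : ∀ i, z i ≤ (A *ᵥ z) i) : ∀ i, z i ≤ 0 := by
  intro i0
  have hupos : ∀ j, (0:ℝ) < u j := fun j =>
    lt_of_lt_of_le (by linarith [mulVec_nonneg' hA hu0 j]) (hu j)
  obtain ⟨i, -, hmax⟩ := Finset.exists_max_image Finset.univ (fun i => z i / u i)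
    ⟨i0, Finset.mem_univ i0⟩
  set c := z i / u i with hc
  have hcz : ∀ j, z j ≤ c * u j := fun j =>
    by have := (div_le_iff₀ (hupos j)).1 (hmax j (Finset.mem_univ j)); linarith
  rcases le_or_gt c 0 with h0 | h0
  · exact le_trans (hcz i0) (mul_nonpos_of_nonpos_of_nonneg h0 (hu0 i0))
  · exfalso
    have h1 : z i ≤ (A *ᵥ fun j => c * u j) i := le_trans (hz i) (mulVec_mono' hA hcz i)
    have h2 : (A *ᵥ fun j => c * u j) i = c * (A *ᵥ u) i := by
      simp only [mulVec, dotProduct, Finset.mul_sum]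
      exact Finset.sum_congr rfl fun j _ => by ring
    have h3 : c * (A *ᵥ u) i ≤ c * (u i - 1) :=
      mul_le_mul_of_nonneg_left (by linarith [hu i]) h0.le
    have h4 : z i = c * u i := by
      rw [hc, div_mul_cancel₀ _ (ne_of_gt (hupos i))]
    nlinarith
  
lemma cert_spec {A : Matrix (Fin n) (Fin n) ℝ} (hA : ∀ i j, 0 ≤ A i j)
    {u : Fin n → ℝ} (hu0 : ∀ i, 0 ≤ u i) (hu : ∀ i, (A *ᵥ u) i + 1 ≤ u i) :
    IsUnit (1 - A).det ∧ (∀ i j, 0 ≤ (1 - A)⁻¹ i j) ∧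
      (∀ i j, (1 : Matrix (Fin n) (Fin n) ℝ) i j ≤ (1 - A)⁻¹ i j) := by
  have hdet : (1 - A).det ≠ 0 := by
    intro h
    obtain ⟨w, hw0, hww⟩ := (Matrix.exists_mulVec_eq_zero_iff).2 h
    have hwA : ∀ i, w i = (A *ᵥ w) i := by
      intro i
      have := congrFun hww i
      simp only [sub_mulVec, one_mulVec, Pi.sub_apply, Pi.zero_apply] at this
      linarith
    have habs : ∀ i, |w i| ≤ (A *ᵥ fun j => |w j|) i := by
      intro i
      rw [hwA i]
      rw [mulVec_apply', mulVec_apply']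
      calc |∑ j, A i j * w j| ≤ ∑ j, |A i j * w j| := Finset.abs_sum_le_sum_abs _ _
        _ = ∑ j, A i j * |w j| := Finset.sum_congr rfl fun j _ => by
              rw [abs_mul, abs_of_nonneg (hA i j)]
    have hz := le_zero_of_subinv hA hu0 hu habs
    exact hw0 (funext fun i => abs_nonpos_iff.1 (hz i))
  have hunit : IsUnit (1 - A).det := isUnit_iff_ne_zero.2 hdet
  have hmul : (1 - A) * (1 - A)⁻¹ = 1 := Matrix.mul_nonsing_inv _ hunit
  have hcols : ∀ j i, 0 ≤ (1 - A)⁻¹ i j ∧ (1 : Matrix (Fin n) (Fin n) ℝ) i j ≤ (1 - A)⁻¹ i j := by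
    intro j
    set w : Fin n → ℝ := fun i => (1 - A)⁻¹ i j with hwdef
    have hcolv : ∀ i, w i - (A *ᵥ w) i = (1 : Matrix (Fin n) (Fin n) ℝ) i j := by
      intro i
      have h1 : ((1 - A) *ᵥ w) i = ((1 - A) * (1 - A)⁻¹) i j := by
        simp only [mulVec, dotProduct, Matrix.mul_apply, hwdef]
      rw [hmul] at h1
      simp only [sub_mulVec, one_mulVec, Pi.sub_apply] at h1
      exact h1
    have hneg : ∀ i, (fun t => -(w t)) i ≤ (A *ᵥ fun t => -(w t)) i := by
      intro i
      have hone : (0:ℝ) ≤ (1 : Matrix (Fin n) (Fin n) ℝ) i j := by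
        by_cases h : i = j <;> simp [Matrix.one_apply, h]
      have h3 : (A *ᵥ fun t => -(w t)) i = -((A *ᵥ w) i) := by
        simp only [mulVec, dotProduct, ← Finset.sum_neg_distrib]
        exact Finset.sum_congr rfl fun t _ => by ring
      have := hcolv i
      simp only []
      linarith
    have hge := le_zero_of_subinv hA hu0 hu hneg
    have hw0 : ∀ i, 0 ≤ w i := fun i => by have := hge i; simp at this; linarith
    intro i
    refine ⟨hw0 i, ?_⟩
    have := hcolv i
    have hAw := mulVec_nonneg' hA hw0 i
    linarith
  exact ⟨hunit, fun i j => (hcols j i).1, fun i j => (hcols j i).2⟩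


lemma lemB {A : Matrix (Fin n) (Fin n) ℝ} (hA : ∀ i j, 0 ≤ A i j)
    {v : Fin n → ℝ} (hv : ∀ i, 0 < v i) (hAv : ∀ i, (A *ᵥ v) i ≤ v i)
    (hcl : ∀ S : Finset (Fin n), S.Nonempty → (∀ i ∈ S, ∀ j, j ∉ S → A i j = 0) →
       ∃ i ∈ S, (A *ᵥ v) i < v i) :
    ∃ u : Fin n → ℝ, (∀ i, 0 ≤ u i) ∧ ∀ i, (A *ᵥ u) i + 1 ≤ u i := by
  classical
  rcases isEmpty_or_nonempty (Fin n) with he | hne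
  · exact ⟨fun _ => 0, fun i => (he.elim i), fun i => (he.elim i)⟩
  have hn : 0 < n := Fin.pos_iff_nonempty.2 hne
  set w : ℕ → Fin n → ℝ := fun t => (fun z => A *ᵥ z)^[t] v with hwdef
  have hw0 : w 0 = v := rfl
  have hwsucc : ∀ t, w (t+1) = A *ᵥ w t := fun t => Function.iterate_succ_apply' _ _ _
  have hwnn : ∀ t i, 0 ≤ w t i := by
    intro t; induction t with
    | zero => exact fun i => (hv i).le
    | succ t ih => intro i; rw [hwsucc]; exact mulVec_nonneg' hA ih i
  have hwle : ∀ t i, w (t+1) i ≤ w t i := by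
    intro t; induction t with
    | zero => intro i; rw [hwsucc, hw0]; exact hAv i
    | succ t ih =>
        intro i; rw [hwsucc (t+1), hwsucc t]
        exact mulVec_mono' hA (by intro l; rw [← hwsucc t]; exact ih l) i
  have hwlev : ∀ t i, w t i ≤ v i := by
    intro t; induction t with
    | zero => exact fun i => le_refl _
    | succ t ih => exact fun i => le_trans (hwle t i) (ih i)
  set D : ℕ → Finset (Fin n) := fun t => Finset.univ.filter (fun i => w (t+1) i < v i) with hD
  have hDmono : ∀ s t, s ≤ t → D s ⊆ D t := by
    have h1 : ∀ t, D t ⊆ D (t+1) := by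
      intro t i hi
      simp only [hD, Finset.mem_filter, Finset.mem_univ, true_and] at hi ⊢
      exact lt_of_le_of_lt (hwle (t+1) i) hi
    intro s t hst
    induction t with
    | zero => rw [Nat.le_zero.1 hst]
    | succ t ih =>
        rcases Nat.lt_or_ge s (t+1) with h | h
        · exact (ih (Nat.lt_succ_iff.1 h)).trans (h1 t)
        · rw [le_antisymm hst h]
  have hDgrow : ∀ t, D t = Finset.univ ∨ t + 1 ≤ (D t).card := by
    intro t; induction t with
    | zero =>
        right
        obtain ⟨i, -, hi⟩ := hcl Finset.univ Finset.univ_nonempty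
          (fun i _ j hj => absurd (Finset.mem_univ j) hj)
        have : i ∈ D 0 := by
          simp only [hD, Finset.mem_filter, Finset.mem_univ, true_and, hwsucc, hw0]
          exact hi
        exact Finset.card_pos.2 ⟨i, this⟩
    | succ t ih =>
        by_cases hDt : D t = Finset.univ
        · left
          exact Finset.eq_univ_of_forall fun i =>
            hDmono t (t+1) (Nat.le_succ t) (hDt ▸ Finset.mem_univ i)
        rcases ih with h | h
        · exact absurd h hDt
        right
        have hss : D t ⊂ Finset.univ := lt_of_le_of_ne (Finset.subset_univ _) hDt
        set S : Finset (Fin n) := Finset.univ \ D t with hS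
        have hSne : S.Nonempty := by
          obtain ⟨i, hiu, hin⟩ := Finset.exists_of_ssubset hss
          exact ⟨i, by simp [hS, hin]⟩
        by_cases hclosed : ∀ i ∈ S, ∀ j, j ∉ S → A i j = 0
        · obtain ⟨i, hiS, hiv⟩ := hcl S hSne hclosed
          have hD0 : i ∈ D 0 := by
            simp only [hD, Finset.mem_filter, Finset.mem_univ, true_and, hwsucc, hw0]
            exact hiv
          have : i ∈ D t := hDmono 0 t (Nat.zero_le t) hD0
          simp [hS, this] at hiS
        · push_neg at hclosed
          obtain ⟨i, hiS, j, hjS, hAij⟩ := hclosed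
          have hjD : j ∈ D t := by
            by_contra hc
            exact hjS (by simp [hS, hc])
          have hiD : i ∉ D t := by
            intro hc; simp [hS, hc] at hiS
          have hinew : i ∈ D (t+1) := by
            simp only [hD, Finset.mem_filter, Finset.mem_univ, true_and]
            have hjlt : w (t+1) j < v j := by
              have := hjD; simp only [hD, Finset.mem_filter, Finset.mem_univ, true_and] at this
              exact this
            have hstrict : (A *ᵥ w (t+1)) i < (A *ᵥ v) i := by
              rw [mulVec_apply', mulVec_apply']
              apply Finset.sum_lt_sum
              · exact fun l _ => mul_le_mul_of_nonneg_left (hwlev (t+1) l) (hA i l)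
              · exact ⟨j, Finset.mem_univ j,
                  mul_lt_mul_of_pos_left hjlt (lt_of_le_of_ne (hA i j) (Ne.symm hAij))⟩
            calc w (t+1+1) i = (A *ᵥ w (t+1)) i := by rw [hwsucc]
              _ < (A *ᵥ v) i := hstrict
              _ ≤ v i := hAv i
          have hins : insert i (D t) ⊆ D (t+1) := by
            intro l hl
            rcases Finset.mem_insert.1 hl with rfl | hl
            · exact hinew
            · exact hDmono t (t+1) (Nat.le_succ t) hl
          calc t + 1 + 1 ≤ (D t).card + 1 := by omega
            _ = (insert i (D t)).card := (Finset.card_insert_of_notMem hiD).symm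
            _ ≤ (D (t+1)).card := Finset.card_le_card hins
  have hall : ∀ i, w n i < v i := by
    have hfinal : D (n-1) = Finset.univ := by
      rcases hDgrow (n-1) with h | h
      · exact h
      · apply Finset.eq_univ_of_card
        have h2 : (D (n-1)).card ≤ n := le_trans (Finset.card_le_univ _) (by simp)
        have h3 : n - 1 + 1 = n := Nat.succ_pred_eq_of_pos hn
        simp [Fintype.card_fin]
        omega
    intro i
    have hmem : i ∈ D (n-1) := hfinal ▸ Finset.mem_univ i
    simp only [hD, Finset.mem_filter, Finset.mem_univ, true_and] at hmem
    have h3 : n - 1 + 1 = n := Nat.succ_pred_eq_of_pos hn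
    rwa [h3] at hmem
  -- build u
  have hune : (Finset.univ : Finset (Fin n)).Nonempty := Finset.univ_nonempty
  set θ : ℝ := Finset.univ.sup' hune (fun i => w n i / v i) with hθ
  have hθlt : θ < 1 := by
    rw [hθ, Finset.sup'_lt_iff]
    exact fun i _ => (div_lt_one (hv i)).2 (hall i)
  have hθge : ∀ i, w n i ≤ θ * v i := by
    intro i
    have h1 : w n i / v i ≤ θ := by
      rw [hθ]; exact Finset.le_sup' (fun i => w n i / v i) (Finset.mem_univ i)
    have := (div_le_iff₀ (hv i)).1 h1
    linarith
  set ε : ℝ := Finset.univ.inf' hune v with hε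
  have hεpos : 0 < ε := by
    rw [hε, Finset.lt_inf'_iff]
    exact fun i _ => hv i
  have hεle : ∀ i, ε ≤ v i := fun i => Finset.inf'_le _ (Finset.mem_univ i)
  set c : ℝ := (1 - θ) * ε with hc
  have hcpos : 0 < c := mul_pos (by linarith) hεpos
  refine ⟨fun i => (∑ r ∈ Finset.range n, w r i) / c, ?_, ?_⟩
  · intro i
    apply div_nonneg _ hcpos.le
    exact Finset.sum_nonneg fun r _ => hwnn r i
  · intro i
    have hAu : (A *ᵥ fun i => (∑ r ∈ Finset.range n, w r i) / c) i
        = (∑ r ∈ Finset.range n, w (r+1) i) / c := by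
      rw [mulVec_apply']
      have h1 : ∀ j : Fin n, A i j * ((∑ r ∈ Finset.range n, w r j) / c)
          = (∑ r ∈ Finset.range n, A i j * w r j) / c := by
        intro j
        rw [← mul_div_assoc, Finset.mul_sum]
      simp only [h1, ← Finset.sum_div]
      congr 1
      rw [Finset.sum_comm]
      exact Finset.sum_congr rfl fun r _ => by rw [hwsucc r]; rfl
    rw [hAu]
    have htel : (∑ r ∈ Finset.range n, w r i) - (∑ r ∈ Finset.range n, w (r+1) i)
        = w 0 i - w n i := by
      rw [← Finset.sum_sub_distrib]
      exact Finset.sum_range_sub' (fun r => w r i) n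
    have hgap : c ≤ w 0 i - w n i := by
      have h2 : w n i ≤ θ * v i := hθge i
      have h3 : (1 - θ) * ε ≤ (1 - θ) * v i :=
        mul_le_mul_of_nonneg_left (hεle i) (by linarith)
      rw [hw0]
      simp only [hc]
      nlinarith
    have hdivle : 1 ≤ ((∑ r ∈ Finset.range n, w r i) - (∑ r ∈ Finset.range n, w (r+1) i)) / c := by
      rw [htel]
      rw [le_div_iff₀ hcpos]
      linarith
    rw [sub_div] at hdivle
    linarith

lemma tapp_nonneg {B : Fin n → Fin n → Fin n → ℝ} (hB : ∀ i j k, 0 ≤ B i j k)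
    {u v : Fin n → ℝ} (hu : ∀ i, 0 ≤ u i) (hv : ∀ i, 0 ≤ v i) (i : Fin n) :
    0 ≤ tapp B u v i := by
  apply Finset.sum_nonneg; intro j _; apply Finset.sum_nonneg; intro k _
  exact mul_nonneg (mul_nonneg (hB i j k) (hu j)) (hv k)

lemma tapp_mono {B : Fin n → Fin n → Fin n → ℝ} (hB : ∀ i j k, 0 ≤ B i j k)
    {u u' v v' : Fin n → ℝ} (hu0 : ∀ i, 0 ≤ u i) (hv0 : ∀ i, 0 ≤ v i)
    (hu : ∀ i, u i ≤ u' i) (hv : ∀ i, v i ≤ v' i) (i : Fin n) :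
    tapp B u v i ≤ tapp B u' v' i := by
  apply Finset.sum_le_sum; intro j _; apply Finset.sum_le_sum; intro k _
  have h1 : 0 ≤ u' j := le_trans (hu0 j) (hu j)
  have h2 : B i j k * u j ≤ B i j k * u' j := mul_le_mul_of_nonneg_left (hu j) (hB i j k)
  have h3 : 0 ≤ B i j k * u' j := mul_nonneg (hB i j k) h1
  exact mul_le_mul h2 (hv k) (hv0 k) h3

lemma subsys_min {a : Fin n → ℝ} {B : Fin n → Fin n → Fin n → ℝ} {m : Fin n → ℝ}
    (ha : ∀ i, 0 ≤ a i) (hB : ∀ i j k, 0 ≤ B i j k) (hm0 : ∀ i, 0 ≤ m i)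
    (hmsol : m = a + tapp B m m)
    (hmin : ∀ x : Fin n → ℝ, (∀ i, 0 ≤ x i) → x = a + tapp B x x → ∀ i, m i ≤ x i)
    (S : Finset (Fin n)) (hScl : ∀ i ∈ S, ∀ j l, B i j l ≠ 0 → j ∈ S ∧ l ∈ S)
    (y : Fin n → ℝ) (hy0 : ∀ i, 0 ≤ y i)
    (hysol : ∀ i ∈ S, y i = a i + tapp B y y i) :
    ∀ i ∈ S, m i ≤ y i := by
  set z : ℕ → Fin n → ℝ := fun r => (fun zz => a + tapp B zz zz)^[r] 0 with hzdef
  have hz0 : z 0 = 0 := rfl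
  have hzsucc : ∀ r, z (r+1) = a + tapp B (z r) (z r) :=
    fun r => Function.iterate_succ_apply' _ _ _
  have hznn : ∀ r i, 0 ≤ z r i := by
    intro r; induction r with
    | zero => intro i; rw [hz0]; exact le_refl 0
    | succ r ih =>
        intro i; rw [hzsucc]
        exact add_nonneg (ha i) (tapp_nonneg hB ih ih i)
  have hzm : ∀ r i, z r i ≤ m i := by
    intro r; induction r with
    | zero => intro i; rw [hz0]; exact hm0 i
    | succ r ih =>
        intro i; rw [hzsucc]
        have := tapp_mono hB (hznn r) (hznn r) ih ih i
        have hmi := congrFun hmsol i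
        simp only [Pi.add_apply] at hmi ⊢
        linarith
  have hzmono : ∀ r i, z r i ≤ z (r+1) i := by
    intro r; induction r with
    | zero =>
        intro i; rw [hz0]; exact hznn 1 i
    | succ r ih =>
        intro i
        have hl : z (r+1) i = a i + tapp B (z r) (z r) i := by rw [hzsucc r]; rfl
        have hr : z (r+2) i = a i + tapp B (z (r+1)) (z (r+1)) i := by
          rw [hzsucc (r+1)]; rfl
        have := tapp_mono hB (hznn r) (hznn r) ih ih i
        rw [hl, hr]
        linarith
  have hzy : ∀ r, ∀ i ∈ S, z r i ≤ y i := by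
    intro r; induction r with
    | zero => intro i _; rw [hz0]; exact hy0 i
    | succ r ih =>
        intro i hi
        rw [hzsucc]
        simp only [Pi.add_apply]
        rw [hysol i hi]
        have hsum : tapp B (z r) (z r) i ≤ tapp B y y i := by
          apply Finset.sum_le_sum; intro j _; apply Finset.sum_le_sum; intro l _
          rcases eq_or_ne (B i j l) 0 with h0 | h0
          · rw [h0]; simp
          · obtain ⟨hj, hl⟩ := hScl i hi j l h0
            have h2 : B i j l * z r j ≤ B i j l * y j :=
              mul_le_mul_of_nonneg_left (ih j hj) (hB i j l)
            have h3 : 0 ≤ B i j l * y j := mul_nonneg (hB i j l) (hy0 j)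
            exact mul_le_mul h2 (ih l hl) (hznn r l) h3
        linarith
  have hbdd : ∀ i, BddAbove (Set.range fun r => z r i) := by
    intro i; exact ⟨m i, by rintro _ ⟨r, rfl⟩; exact hzm r i⟩
  have hL : ∀ i, Filter.Tendsto (fun r => z r i) Filter.atTop (nhds (⨆ r, z r i)) :=
    fun i => tendsto_atTop_ciSup (monotone_nat_of_le_succ (hzmono · i)) (hbdd i)
  set L : Fin n → ℝ := fun i => ⨆ r, z r i with hLdef
  have hLsol : L = a + tapp B L L := by
    funext i
    have h1 : Filter.Tendsto (fun r => z (r+1) i) Filter.atTop (nhds (L i)) :=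
      (hL i).comp (Filter.tendsto_add_atTop_nat 1)
    have h2 : Filter.Tendsto (fun r => a i + tapp B (z r) (z r) i) Filter.atTop
        (nhds (a i + tapp B L L i)) := by
      apply Filter.Tendsto.add tendsto_const_nhds
      apply tendsto_finset_sum; intro j _
      apply tendsto_finset_sum; intro l _
      exact (Filter.Tendsto.mul (tendsto_const_nhds.mul (hL j)) (hL l))
    have h3 : (fun r => z (r+1) i) = fun r => a i + tapp B (z r) (z r) i := by
      funext r; rw [hzsucc r]; rfl
    rw [h3] at h1
    exact tendsto_nhds_unique h1 h2
  have hL0 : ∀ i, 0 ≤ L i := by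
    intro i
    exact le_trans (hznn 0 i) (le_ciSup (hbdd i) 0)
  have hmL := hmin L hL0 hLsol
  intro i hi
  exact le_trans (hmL i) (ciSup_le fun r => hzy r i hi)


lemma newton_step {a : Fin n → ℝ} {B : Fin n → Fin n → Fin n → ℝ} {m : Fin n → ℝ}
    (ha : ∀ i, 0 ≤ a i) (hB : ∀ i j k, 0 ≤ B i j k)
    (hmpos : ∀ i, 0 < m i) (hmsol : m = a + tapp B m m)
    (hmin : ∀ z : Fin n → ℝ, (∀ i, 0 ≤ z i) → z = a + tapp B z z → ∀ i, m i ≤ z i)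
    {x : Fin n → ℝ} (hx0 : ∀ i, 0 ≤ x i) (hxm : ∀ i, x i ≤ m i)
    (hFx : ∀ i, 0 ≤ (a + tapp B x x - x) i)
    (hcert : ∃ u, (∀ i, 0 ≤ u i) ∧ ∀ i, (((matL B x + matR B x)) *ᵥ u) i + 1 ≤ u i)
    (y : Fin n → ℝ) (hy : y = x + (Rmat B x)⁻¹ *ᵥ (a + tapp B x x - x)) :
    IsUnit (Rmat B x).det ∧ (∀ i j, 0 ≤ (Rmat B x)⁻¹ i j) ∧
    (∀ i, x i ≤ y i) ∧ (∀ i, y i ≤ m i) ∧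
    (∀ i, 0 ≤ (a + tapp B y y - y) i) ∧
    (∃ u, (∀ i, 0 ≤ u i) ∧ ∀ i, ((matL B y + matR B y) *ᵥ u) i + 1 ≤ u i) := by
  classical
  obtain ⟨u1, hu10, hu1⟩ := hcert
  set N : Matrix (Fin n) (Fin n) ℝ := matL B x + matR B x with hN
  have hNnn : ∀ i j, 0 ≤ N i j := Nmat_nonneg hB hx0
  have hRx : Rmat B x = 1 - N := Rmat_eq B x
  have hspec : IsUnit (1 - N).det ∧ (∀ i j, 0 ≤ (1 - N)⁻¹ i j) ∧
      (∀ i j, (1 : Matrix (Fin n) (Fin n) ℝ) i j ≤ (1 - N)⁻¹ i j) :=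
    cert_spec hNnn hu10 hu1
  have hdet : IsUnit (Rmat B x).det := by rw [hRx]; exact hspec.1
  have hinvnn : ∀ i j, 0 ≤ (Rmat B x)⁻¹ i j := by rw [hRx]; exact hspec.2.1
  have hinvge : ∀ i j, (1 : Matrix (Fin n) (Fin n) ℝ) i j ≤ (Rmat B x)⁻¹ i j := by
    rw [hRx]; exact hspec.2.2
  set F : Fin n → ℝ := a + tapp B x x - x with hFdef
  set δ : Fin n → ℝ := (Rmat B x)⁻¹ *ᵥ F with hδdef
  have hδnn : ∀ i, 0 ≤ δ i := fun i => mulVec_nonneg' hinvnn hFx i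
  have hyd : y = x + δ := hy
  have hxy : ∀ i, x i ≤ y i := fun i => by
    rw [hyd]; simp only [Pi.add_apply]; linarith [hδnn i]
  have hRδ : Rmat B x *ᵥ δ = F := by
    rw [hδdef, Matrix.mulVec_mulVec, Matrix.mul_nonsing_inv _ hdet, Matrix.one_mulVec]
  set d : Fin n → ℝ := m - x with hddef
  have hdnn : ∀ i, 0 ≤ d i := fun i => by
    rw [hddef]; simp only [Pi.sub_apply]; linarith [hxm i]
  have hId1 : Rmat B x *ᵥ d = F + tapp B d d := id1 hmsol x
  set d' : Fin n → ℝ := m - y with hd'def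
  have hdd' : d' = d - δ := by rw [hd'def, hddef, hyd]; abel
  have hRd' : Rmat B x *ᵥ d' = tapp B d d := by
    rw [hdd', Matrix.mulVec_sub, hId1, hRδ]; abel
  have hd'inv : d' = (Rmat B x)⁻¹ *ᵥ tapp B d d := by
    rw [← hRd', Matrix.mulVec_mulVec, Matrix.nonsing_inv_mul _ hdet, Matrix.one_mulVec]
  have htddnn : ∀ i, 0 ≤ tapp B d d i := fun i => tapp_nonneg hB hdnn hdnn i
  have hd'nn : ∀ i, 0 ≤ d' i := fun i => by
    rw [hd'inv]; exact mulVec_nonneg' hinvnn htddnn i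
  have hym : ∀ i, y i ≤ m i := fun i => by
    have := hd'nn i; rw [hd'def] at this; simp only [Pi.sub_apply] at this; linarith
  have hy0 : ∀ i, 0 ≤ y i := fun i => le_trans (hx0 i) (hxy i)
  have hd'ge : ∀ i, tapp B d d i ≤ d' i := by
    intro i
    rw [hd'inv, mulVec_apply']
    have h1 : (Rmat B x)⁻¹ i i * tapp B d d i ≤ ∑ j, (Rmat B x)⁻¹ i j * tapp B d d j :=
      Finset.single_le_sum (f := fun j => (Rmat B x)⁻¹ i j * tapp B d d j)
        (fun j _ => mul_nonneg (hinvnn i j) (htddnn j)) (Finset.mem_univ i)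
    have h2 : (1:ℝ) ≤ (Rmat B x)⁻¹ i i := by
      have := hinvge i i; rwa [Matrix.one_apply_eq] at this
    have h3 : 1 * tapp B d d i ≤ (Rmat B x)⁻¹ i i * tapp B d d i :=
      mul_le_mul_of_nonneg_right h2 (htddnn i)
    linarith
  have hFy : a + tapp B y y - y = tapp B δ δ := by
    rw [hyd, id2 B x δ, hRδ, ← hFdef]; abel
  have hFynn : ∀ i, 0 ≤ (a + tapp B y y - y) i := by
    rw [hFy]; intro i; exact tapp_nonneg hB hδnn hδnn i
  have hzx0 := zfacts ha hB hmpos hmsol hx0 hxm hFx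
  have hzx : ∀ i, x i = m i →
      (F i = 0 ∧ tapp B (m - x) (m - x) i = 0 ∧
       (∀ j, N i j ≠ 0 → x j = m j) ∧
       (∀ j l, B i j l ≠ 0 → x j = m j ∧ x l = m l)) := hzx0
  clear hzx0
  have hzy := zfacts ha hB hmpos hmsol hy0 hym hFynn
  -- stationarity of touched coordinates
  have hδN : ∀ i, δ i = F i + (N *ᵥ δ) i := by
    intro i
    have h3 := congrFun hRδ i
    rw [hRx, Matrix.sub_mulVec, Matrix.one_mulVec] at h3
    simp only [Pi.sub_apply] at h3
    linarith
  have hstat : ∀ i, x i = m i → δ i = 0 := by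
    intro i0 hi0
    set zv : Fin n → ℝ := fun i => if x i = m i then δ i else 0 with hzv
    have hzvnn : ∀ j, 0 ≤ zv j := fun j => by
      rw [hzv]; dsimp only; split
      · exact hδnn j
      · exact le_refl 0
    have hzvle : ∀ i, zv i ≤ (N *ᵥ zv) i := by
      intro i
      by_cases hxi : x i = m i
      · have hF0 := (hzx i hxi).1
        have h2 : ∀ j, N i j * δ j = N i j * zv j := by
          intro j
          by_cases hxj : x j = m j
          · rw [hzv]; dsimp only; rw [if_pos hxj]
          · rcases eq_or_ne (N i j) 0 with h | h
            · rw [h, zero_mul, zero_mul]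
            · exact absurd ((hzx i hxi).2.2.1 j h) hxj
        have h4 : (N *ᵥ δ) i = (N *ᵥ zv) i := by
          rw [mulVec_apply', mulVec_apply']
          exact Finset.sum_congr rfl fun j _ => h2 j
        have h5 : zv i = δ i := by rw [hzv]; dsimp only; rw [if_pos hxi]
        rw [h5, hδN i, h4]
        have : F i = 0 := hF0
        linarith
      · have h5 : zv i = 0 := by rw [hzv]; dsimp only; rw [if_neg hxi]
        rw [h5]
        exact mulVec_nonneg' hNnn hzvnn i
    have hzv0 := le_zero_of_subinv hNnn hu10 hu1 hzvle
    have h6 := hzv0 i0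
    have h7 : zv i0 = δ i0 := by rw [hzv]; dsimp only; rw [if_pos hi0]
    rw [h7] at h6
    exact le_antisymm h6 (hδnn i0)
  have hyx : ∀ i, x i = m i → y i = x i := fun i hi => by
    rw [hyd]; simp only [Pi.add_apply, hstat i hi, add_zero]
  have hyxm : ∀ i, x i = m i → y i = m i := fun i hi => (hyx i hi).trans hi
  set Ny : Matrix (Fin n) (Fin n) ℝ := matL B y + matR B y with hNydef
  have hNynn : ∀ i j, 0 ≤ Ny i j := Nmat_nonneg hB hy0
  have hzy1 : ∀ i, y i = m i →
      ((a + tapp B y y - y) i = 0 ∧ tapp B (m - y) (m - y) i = 0 ∧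
       (∀ j, Ny i j ≠ 0 → y j = m j) ∧
       (∀ j l, B i j l ≠ 0 → y j = m j ∧ y l = m l)) := hzy
  clear hzy
  have hrowN : ∀ i, x i = m i → ∀ j, Ny i j = N i j := by
    intro i hi j
    have h1 : matL B y i j = matL B x i j := by
      show (∑ k, B i k j * y k) = ∑ k, B i k j * x k
      apply Finset.sum_congr rfl; intro k _
      rcases eq_or_ne (B i k j) 0 with h | h
      · rw [h, zero_mul, zero_mul]
      · rw [hyx k ((hzx i hi).2.2.2 k j h).1]
    have h2 : matR B y i j = matR B x i j := by
      show (∑ k, B i j k * y k) = ∑ k, B i j k * x k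
      apply Finset.sum_congr rfl; intro k _
      rcases eq_or_ne (B i j k) 0 with h | h
      · rw [h, zero_mul, zero_mul]
      · rw [hyx k ((hzx i hi).2.2.2 j k h).2]
    rw [hNydef, hN, Matrix.add_apply, Matrix.add_apply, h1, h2]
  set Nm : Matrix (Fin n) (Fin n) ℝ := matL B m + matR B m with hNmdef
  have hNyNm : ∀ i, y i = m i → ∀ j, Ny i j = Nm i j := by
    intro i hi j
    have h1 : matL B y i j = matL B m i j := by
      show (∑ k, B i k j * y k) = ∑ k, B i k j * m k
      apply Finset.sum_congr rfl; intro k _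
      rcases eq_or_ne (B i k j) 0 with h | h
      · rw [h, zero_mul, zero_mul]
      · rw [((hzy1 i hi).2.2.2 k j h).1]
    have h2 : matR B y i j = matR B m i j := by
      show (∑ k, B i j k * y k) = ∑ k, B i j k * m k
      apply Finset.sum_congr rfl; intro k _
      rcases eq_or_ne (B i j k) 0 with h | h
      · rw [h, zero_mul, zero_mul]
      · rw [((hzy1 i hi).2.2.2 j k h).2]
    rw [hNydef, hNmdef, Matrix.add_apply, Matrix.add_apply, h1, h2]
  have htddZy : ∀ i, y i = m i → tapp B d d i = 0 := by
    intro i hi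
    have h1 : d' i = 0 := by rw [hd'def]; simp only [Pi.sub_apply, hi, sub_self]
    have h2 := hd'ge i
    have h3 := htddnn i
    linarith
  have hNmd : ∀ i, (Nm *ᵥ d) i = d i - F i + tapp B d d i := by
    intro i
    have h3 := congrFun (id3 hmsol x) i
    rw [Rmat_eq, ← hNmdef, Matrix.sub_mulVec, Matrix.one_mulVec, ← hddef, ← hFdef] at h3
    simp only [Pi.sub_apply] at h3 ⊢
    linarith
  clear_value N F δ d d' Ny Nm
  -- Block 2 : coordinates newly touching m
  set s2 : Finset (Fin n) := Finset.univ.filter (fun i => y i = m i ∧ ¬ x i = m i) with hs2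
  have hs2mem : ∀ i, i ∈ s2 ↔ (y i = m i ∧ ¬ x i = m i) := fun i => by
    rw [hs2]; simp
  set A2 : Matrix (Fin n) (Fin n) ℝ :=
    Matrix.of (fun i j => if i ∈ s2 ∧ j ∈ s2 then Ny i j else 0) with hA2
  have hA2app : ∀ i j, A2 i j = if i ∈ s2 ∧ j ∈ s2 then Ny i j else 0 := fun i j => rfl
  set v2 : Fin n → ℝ := fun j => if j ∈ s2 then d j else 1 with hv2
  have hv2app : ∀ j, v2 j = if j ∈ s2 then d j else 1 := fun j => rfl
  clear_value A2 v2
  have hv2pos : ∀ i, 0 < v2 i := by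
    intro i; rw [hv2app]; by_cases h : i ∈ s2
    · rw [if_pos h]
      have h2 := (hs2mem i).1 h
      rw [hddef]; simp only [Pi.sub_apply]
      have := hxm i
      rcases lt_or_eq_of_le this with h3 | h3
      · linarith
      · exact absurd h3 h2.2
    · rw [if_neg h]; norm_num
  have hA2nn : ∀ i j, 0 ≤ A2 i j := by
    intro i j; rw [hA2app]; split
    · exact hNynn i j
    · exact le_refl 0
  have hA2row : ∀ i ∈ s2, (A2 *ᵥ v2) i = d i - F i := by
    intro i hi
    have hiy : y i = m i := ((hs2mem i).1 hi).1
    rw [mulVec_apply']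
    have h1 : ∀ j, A2 i j * v2 j = Nm i j * d j := by
      intro j
      by_cases hj : j ∈ s2
      · rw [hA2app, if_pos ⟨hi, hj⟩, hv2app, if_pos hj, hNyNm i hiy j]
      · rw [hA2app, if_neg (fun hc => hj hc.2), zero_mul]
        by_cases hxj : x j = m j
        · have hdj : d j = 0 := by rw [hddef]; simp only [Pi.sub_apply, hxj, sub_self]
          rw [hdj, mul_zero]
        · have hyj : ¬ y j = m j := fun hc => hj ((hs2mem j).2 ⟨hc, hxj⟩)
          have hNm0 : Nm i j = 0 := by
            have hl : matL B m i j = 0 := by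
              show (∑ k, B i k j * m k) = 0
              apply Finset.sum_eq_zero; intro k _
              rcases eq_or_ne (B i k j) 0 with h | h
              · rw [h, zero_mul]
              · exact absurd ((hzy1 i hiy).2.2.2 k j h).2 hyj
            have hr : matR B m i j = 0 := by
              show (∑ k, B i j k * m k) = 0
              apply Finset.sum_eq_zero; intro k _
              rcases eq_or_ne (B i j k) 0 with h | h
              · rw [h, zero_mul]
              · exact absurd ((hzy1 i hiy).2.2.2 j k h).1 hyj
            rw [hNmdef, Matrix.add_apply, hl, hr, add_zero]
          rw [hNm0, zero_mul]
    rw [Finset.sum_congr rfl (fun j _ => h1 j)]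
    have h2 : (∑ j, Nm i j * d j) = (Nm *ᵥ d) i := rfl
    rw [h2, hNmd i, htddZy i hiy, add_zero]
  have hA2zero : ∀ i, i ∉ s2 → (A2 *ᵥ v2) i = 0 := by
    intro i hi
    rw [mulVec_apply']; apply Finset.sum_eq_zero; intro j _
    rw [hA2app, if_neg (fun hc => hi hc.1), zero_mul]
  have hA2v : ∀ i, (A2 *ᵥ v2) i ≤ v2 i := by
    intro i; by_cases hi : i ∈ s2
    · rw [hA2row i hi, hv2app, if_pos hi]
      linarith [hFx i]
    · rw [hA2zero i hi]
      exact (hv2pos i).le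
  have htddsum : ∀ i, y i = m i → (∑ j, ∑ l, B i j l * d j * d l) = 0 :=
    fun i hi => htddZy i hi
  have hdzero_iff : ∀ j, d j = 0 ↔ x j = m j := by
    intro j; rw [hddef]; simp only [Pi.sub_apply]
    constructor
    · intro h; linarith
    · intro h; rw [h]; ring
  have hcl2 : ∀ S : Finset (Fin n), S.Nonempty → (∀ i ∈ S, ∀ j, j ∉ S → A2 i j = 0) →
      ∃ i ∈ S, (A2 *ᵥ v2) i < v2 i := by
    intro S hSne hScl
    by_cases hSs2 : ∀ i ∈ S, i ∈ s2
    swap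
    · push_neg at hSs2; obtain ⟨i, hiS, his2⟩ := hSs2
      refine ⟨i, hiS, ?_⟩
      rw [hA2zero i his2, hv2app, if_neg his2]
      norm_num
    · by_contra hno
      push_neg at hno
      have hFS : ∀ i ∈ S, F i = 0 := by
        intro i hiS
        have h1 := hA2row i (hSs2 i hiS)
        have h2 := hno i hiS
        have h3 : v2 i = d i := by rw [hv2app, if_pos (hSs2 i hiS)]
        rw [h1, h3] at h2
        have := hFx i
        linarith
      set W : Finset (Fin n) := (Finset.univ.filter (fun i => x i = m i)) ∪ S with hW
      have hWcl : ∀ i ∈ W, ∀ j l, B i j l ≠ 0 → j ∈ W ∧ l ∈ W := by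
        intro i hiW j l hBn
        rcases Finset.mem_union.1 hiW with hiZ | hiS
        · have hix : x i = m i := by
            have := Finset.mem_filter.1 hiZ; exact this.2
          have h5 := (hzx i hix).2.2.2 j l hBn
          constructor
          · exact Finset.mem_union_left _ (Finset.mem_filter.2 ⟨Finset.mem_univ j, h5.1⟩)
          · exact Finset.mem_union_left _ (Finset.mem_filter.2 ⟨Finset.mem_univ l, h5.2⟩)
        · have hi2 := hSs2 i hiS
          have hiy : y i = m i := ((hs2mem i).1 hi2).1
          have hyjl := (hzy1 i hiy).2.2.2 j l hBn
          have hterm : B i j l * d j * d l = 0 := by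
            have h6 := double_sum_zero (g := fun j l => B i j l * d j * d l)
              (fun j l => mul_nonneg (mul_nonneg (hB i j l) (hdnn j)) (hdnn l))
              (htddsum i hiy)
            exact h6 j l
          have hBpos : 0 < B i j l := lt_of_le_of_ne (hB i j l) (Ne.symm hBn)
          have hdjl : x j = m j ∨ x l = m l := by
            rcases mul_eq_zero.1 hterm with h | h
            · rcases mul_eq_zero.1 h with h' | h'
              · exact absurd h' hBn
              · exact Or.inl ((hdzero_iff j).1 h')
            · exact Or.inr ((hdzero_iff l).1 h)
          rcases hdjl with hxj | hxl
          · refine ⟨Finset.mem_union_left _ (Finset.mem_filter.2 ⟨Finset.mem_univ j, hxj⟩), ?_⟩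
            by_cases hxl : x l = m l
            · exact Finset.mem_union_left _ (Finset.mem_filter.2 ⟨Finset.mem_univ l, hxl⟩)
            · have hl2 : l ∈ s2 := (hs2mem l).2 ⟨hyjl.2, hxl⟩
              by_cases hlS : l ∈ S
              · exact Finset.mem_union_right _ hlS
              · exfalso
                have hA2il : A2 i l = 0 := hScl i hiS l hlS
                rw [hA2app, if_pos ⟨hi2, hl2⟩] at hA2il
                have hylb : B i j l * y j ≤ Ny i l := by
                  rw [hNydef, Matrix.add_apply]
                  have h7 : B i j l * y j ≤ matL B y i l := by
                    show B i j l * y j ≤ ∑ k, B i k l * y k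
                    exact Finset.single_le_sum (f := fun k => B i k l * y k)
                      (fun k _ => mul_nonneg (hB i k l) (hy0 k)) (Finset.mem_univ j)
                  have h8 : (0:ℝ) ≤ matR B y i l := by
                    show (0:ℝ) ≤ ∑ k, B i l k * y k
                    exact Finset.sum_nonneg fun k _ => mul_nonneg (hB i l k) (hy0 k)
                  linarith
                have hyjpos : 0 < y j := by rw [hyjl.1]; exact hmpos j
                linarith [mul_pos hBpos hyjpos]
          · refine ⟨?_, Finset.mem_union_left _ (Finset.mem_filter.2 ⟨Finset.mem_univ l, hxl⟩)⟩
            by_cases hxj : x j = m j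
            · exact Finset.mem_union_left _ (Finset.mem_filter.2 ⟨Finset.mem_univ j, hxj⟩)
            · have hj2 : j ∈ s2 := (hs2mem j).2 ⟨hyjl.1, hxj⟩
              by_cases hjS : j ∈ S
              · exact Finset.mem_union_right _ hjS
              · exfalso
                have hA2ij : A2 i j = 0 := hScl i hiS j hjS
                rw [hA2app, if_pos ⟨hi2, hj2⟩] at hA2ij
                have hylb : B i j l * y l ≤ Ny i j := by
                  rw [hNydef, Matrix.add_apply]
                  have h7 : B i j l * y l ≤ matR B y i j := by
                    show B i j l * y l ≤ ∑ k, B i j k * y k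
                    exact Finset.single_le_sum (f := fun k => B i j k * y k)
                      (fun k _ => mul_nonneg (hB i j k) (hy0 k)) (Finset.mem_univ l)
                  have h8 : (0:ℝ) ≤ matL B y i j := by
                    show (0:ℝ) ≤ ∑ k, B i k j * y k
                    exact Finset.sum_nonneg fun k _ => mul_nonneg (hB i k j) (hy0 k)
                  linarith
                have hylpos : 0 < y l := by rw [hyjl.2]; exact hmpos l
                linarith [mul_pos hBpos hylpos]
      have hWsol : ∀ i ∈ W, x i = a i + tapp B x x i := by
        intro i hiW
        have hFi0 : F i = 0 := by
          rcases Finset.mem_union.1 hiW with hiZ | hiS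
          · exact (hzx i (Finset.mem_filter.1 hiZ).2).1
          · exact hFS i hiS
        have hFi : F i = (a + tapp B x x - x) i := congrFun hFdef i
        simp only [Pi.sub_apply, Pi.add_apply] at hFi
        linarith
      have hmlex := subsys_min ha hB (fun i => (hmpos i).le) hmsol hmin W hWcl x hx0 hWsol
      obtain ⟨i0, hi0⟩ := hSne
      have h9 := hmlex i0 (Finset.mem_union_right _ hi0)
      have h10 := ((hs2mem i0).1 (hSs2 i0 hi0)).2
      exact h10 (le_antisymm (hxm i0) h9)
  obtain ⟨u2', hu2'0, hu2'⟩ := lemB hA2nn hv2pos hA2v hcl2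
  set u2 : Fin n → ℝ := fun i => if i ∈ s2 then u2' i else 0 with hu2def
  have hu2app : ∀ i, u2 i = if i ∈ s2 then u2' i else 0 := fun i => rfl
  clear_value u2
  have hu20 : ∀ i, 0 ≤ u2 i := fun i => by
    rw [hu2app]; split
    · exact hu2'0 i
    · exact le_refl 0
  have hu2key : ∀ i ∈ s2, (Ny *ᵥ u2) i + 1 ≤ u2 i := by
    intro i hi
    have h1 : (Ny *ᵥ u2) i = (A2 *ᵥ u2') i := by
      rw [mulVec_apply', mulVec_apply']
      apply Finset.sum_congr rfl; intro j _
      by_cases hj : j ∈ s2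
      · rw [hu2app, if_pos hj, hA2app, if_pos ⟨hi, hj⟩]
      · rw [hu2app, if_neg hj, hA2app, if_neg (fun hc => hj hc.2), mul_zero, zero_mul]
    rw [h1, hu2app, if_pos hi]
    exact hu2' i
  have hu2Z : ∀ i, x i = m i → (Ny *ᵥ u2) i = 0 := by
    intro i hix
    rw [mulVec_apply']; apply Finset.sum_eq_zero; intro j _
    by_cases hj : j ∈ s2
    · have hxj : ¬ x j = m j := ((hs2mem j).1 hj).2
      have hNij : Ny i j = N i j := hrowN i hix j
      have hN0 : N i j = 0 := by
        by_contra h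
        exact hxj ((hzx i hix).2.2.1 j h)
      rw [hNij, hN0, zero_mul]
    · rw [hu2app, if_neg hj, mul_zero]
  -- Block 3 : coordinates not yet converged
  set Fy : Fin n → ℝ := a + tapp B y y - y with hFydef
  have hFyapp : ∀ i, Fy i = (a + tapp B y y - y) i := fun i => rfl
  have hzy2 : ∀ i, y i = m i → Fy i = 0 := fun i hi => (hzy1 i hi).1
  clear_value Fy
  have hNyd' : ∀ i, (Ny *ᵥ d') i = d' i - Fy i - tapp B d' d' i := by
    intro i
    have h3 := congrFun (id1 hmsol y) i
    rw [Rmat_eq, ← hNydef, Matrix.sub_mulVec, Matrix.one_mulVec, ← hd'def, ← hFydef] at h3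
    simp only [Pi.sub_apply, Pi.add_apply] at h3 ⊢
    linarith
  have hd'zero : ∀ j, y j = m j → d' j = 0 := by
    intro j hj; rw [hd'def]; simp only [Pi.sub_apply, hj, sub_self]
  have hd'zero_iff : ∀ j, d' j = 0 ↔ y j = m j := by
    intro j; rw [hd'def]; simp only [Pi.sub_apply]
    constructor
    · intro h; linarith
    · intro h; rw [h]; ring
  set s3 : Finset (Fin n) := Finset.univ.filter (fun i => ¬ y i = m i) with hs3
  have hs3mem : ∀ i, i ∈ s3 ↔ ¬ y i = m i := fun i => by rw [hs3]; simp
  set A3 : Matrix (Fin n) (Fin n) ℝ :=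
    Matrix.of (fun i j => if i ∈ s3 ∧ j ∈ s3 then Ny i j else 0) with hA3
  have hA3app : ∀ i j, A3 i j = if i ∈ s3 ∧ j ∈ s3 then Ny i j else 0 := fun i j => rfl
  set v3 : Fin n → ℝ := fun j => if j ∈ s3 then d' j else 1 with hv3
  have hv3app : ∀ j, v3 j = if j ∈ s3 then d' j else 1 := fun j => rfl
  clear_value A3 v3
  have hv3pos : ∀ i, 0 < v3 i := by
    intro i; rw [hv3app]; by_cases h : i ∈ s3
    · rw [if_pos h]
      have h2 := (hs3mem i).1 h
      rcases lt_or_eq_of_le (hd'nn i) with h3 | h3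
      · exact h3
      · exact absurd ((hd'zero_iff i).1 h3.symm) h2
    · rw [if_neg h]; norm_num
  have hA3nn : ∀ i j, 0 ≤ A3 i j := by
    intro i j; rw [hA3app]; split
    · exact hNynn i j
    · exact le_refl 0
  have hA3row : ∀ i ∈ s3, (A3 *ᵥ v3) i = d' i - Fy i - tapp B d' d' i := by
    intro i hi
    rw [mulVec_apply']
    have h1 : ∀ j, A3 i j * v3 j = Ny i j * d' j := by
      intro j
      by_cases hj : j ∈ s3
      · rw [hA3app, if_pos ⟨hi, hj⟩, hv3app, if_pos hj]
      · rw [hA3app, if_neg (fun hc => hj hc.2), zero_mul]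
        have hyj : y j = m j := by
          by_contra hc
          exact hj ((hs3mem j).2 hc)
        rw [hd'zero j hyj, mul_zero]
    rw [Finset.sum_congr rfl (fun j _ => h1 j)]
    exact hNyd' i
  have hA3zero : ∀ i, i ∉ s3 → (A3 *ᵥ v3) i = 0 := by
    intro i hi
    rw [mulVec_apply']; apply Finset.sum_eq_zero; intro j _
    rw [hA3app, if_neg (fun hc => hi hc.1), zero_mul]
  have htd'nn : ∀ i, 0 ≤ tapp B d' d' i := fun i => tapp_nonneg hB hd'nn hd'nn i
  have hA3v : ∀ i, (A3 *ᵥ v3) i ≤ v3 i := by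
    intro i; by_cases hi : i ∈ s3
    · rw [hA3row i hi, hv3app, if_pos hi]
      have := hFynn i
      have hFi : Fy i = (a + tapp B y y - y) i := congrFun hFydef i
      linarith [htd'nn i]
    · rw [hA3zero i hi]
      exact (hv3pos i).le
  have hcl3 : ∀ S : Finset (Fin n), S.Nonempty → (∀ i ∈ S, ∀ j, j ∉ S → A3 i j = 0) →
      ∃ i ∈ S, (A3 *ᵥ v3) i < v3 i := by
    intro S hSne hScl
    by_cases hSs3 : ∀ i ∈ S, i ∈ s3
    swap
    · push_neg at hSs3; obtain ⟨i, hiS, his3⟩ := hSs3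
      refine ⟨i, hiS, ?_⟩
      rw [hA3zero i his3, hv3app, if_neg his3]
      norm_num
    · by_contra hno
      push_neg at hno
      have hFS : ∀ i ∈ S, Fy i = 0 ∧ tapp B d' d' i = 0 := by
        intro i hiS
        have h1 := hA3row i (hSs3 i hiS)
        have h2 := hno i hiS
        have h3 : v3 i = d' i := by rw [hv3app, if_pos (hSs3 i hiS)]
        rw [h1, h3] at h2
        have h4 := hFynn i
        have hFi : Fy i = (a + tapp B y y - y) i := congrFun hFydef i
        have h5 := htd'nn i
        constructor
        · linarith
        · linarith
      set W : Finset (Fin n) := (Finset.univ.filter (fun i => y i = m i)) ∪ S with hW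
      have hWcl : ∀ i ∈ W, ∀ j l, B i j l ≠ 0 → j ∈ W ∧ l ∈ W := by
        intro i hiW j l hBn
        rcases Finset.mem_union.1 hiW with hiZ | hiS
        · have hiy : y i = m i := (Finset.mem_filter.1 hiZ).2
          have h5 := (hzy1 i hiy).2.2.2 j l hBn
          constructor
          · exact Finset.mem_union_left _ (Finset.mem_filter.2 ⟨Finset.mem_univ j, h5.1⟩)
          · exact Finset.mem_union_left _ (Finset.mem_filter.2 ⟨Finset.mem_univ l, h5.2⟩)
        · have htd0 : (∑ j', ∑ l', B i j' l' * d' j' * d' l') = 0 := (hFS i hiS).2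
          have hterm : B i j l * d' j * d' l = 0 := by
            have h6 := double_sum_zero (g := fun j l => B i j l * d' j * d' l)
              (fun j l => mul_nonneg (mul_nonneg (hB i j l) (hd'nn j)) (hd'nn l)) htd0
            exact h6 j l
          have hBpos : 0 < B i j l := lt_of_le_of_ne (hB i j l) (Ne.symm hBn)
          have hdjl : y j = m j ∨ y l = m l := by
            rcases mul_eq_zero.1 hterm with h | h
            · rcases mul_eq_zero.1 h with h' | h'
              · exact absurd h' hBn
              · exact Or.inl ((hd'zero_iff j).1 h')
            · exact Or.inr ((hd'zero_iff l).1 h)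
          rcases hdjl with hyj | hyl
          · refine ⟨Finset.mem_union_left _ (Finset.mem_filter.2 ⟨Finset.mem_univ j, hyj⟩), ?_⟩
            by_cases hyl : y l = m l
            · exact Finset.mem_union_left _ (Finset.mem_filter.2 ⟨Finset.mem_univ l, hyl⟩)
            · have hl3 : l ∈ s3 := (hs3mem l).2 hyl
              by_cases hlS : l ∈ S
              · exact Finset.mem_union_right _ hlS
              · exfalso
                have hA3il : A3 i l = 0 := hScl i hiS l hlS
                rw [hA3app, if_pos ⟨hSs3 i hiS, hl3⟩] at hA3il
                have hylb : B i j l * y j ≤ Ny i l := by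
                  rw [hNydef, Matrix.add_apply]
                  have h7 : B i j l * y j ≤ matL B y i l := by
                    show B i j l * y j ≤ ∑ k, B i k l * y k
                    exact Finset.single_le_sum (f := fun k => B i k l * y k)
                      (fun k _ => mul_nonneg (hB i k l) (hy0 k)) (Finset.mem_univ j)
                  have h8 : (0:ℝ) ≤ matR B y i l := by
                    show (0:ℝ) ≤ ∑ k, B i l k * y k
                    exact Finset.sum_nonneg fun k _ => mul_nonneg (hB i l k) (hy0 k)
                  linarith
                have hyjpos : 0 < y j := by rw [hyj]; exact hmpos j
                linarith [mul_pos hBpos hyjpos]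
          · refine ⟨?_, Finset.mem_union_left _ (Finset.mem_filter.2 ⟨Finset.mem_univ l, hyl⟩)⟩
            by_cases hyj : y j = m j
            · exact Finset.mem_union_left _ (Finset.mem_filter.2 ⟨Finset.mem_univ j, hyj⟩)
            · have hj3 : j ∈ s3 := (hs3mem j).2 hyj
              by_cases hjS : j ∈ S
              · exact Finset.mem_union_right _ hjS
              · exfalso
                have hA3ij : A3 i j = 0 := hScl i hiS j hjS
                rw [hA3app, if_pos ⟨hSs3 i hiS, hj3⟩] at hA3ij
                have hylb : B i j l * y l ≤ Ny i j := by
                  rw [hNydef, Matrix.add_apply]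
                  have h7 : B i j l * y l ≤ matR B y i j := by
                    show B i j l * y l ≤ ∑ k, B i j k * y k
                    exact Finset.single_le_sum (f := fun k => B i j k * y k)
                      (fun k _ => mul_nonneg (hB i j k) (hy0 k)) (Finset.mem_univ l)
                  have h8 : (0:ℝ) ≤ matL B y i j := by
                    show (0:ℝ) ≤ ∑ k, B i k j * y k
                    exact Finset.sum_nonneg fun k _ => mul_nonneg (hB i k j) (hy0 k)
                  linarith
                have hylpos : 0 < y l := by rw [hyl]; exact hmpos l
                linarith [mul_pos hBpos hylpos]
      have hWsol : ∀ i ∈ W, y i = a i + tapp B y y i := by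
        intro i hiW
        have hFi0 : Fy i = 0 := by
          rcases Finset.mem_union.1 hiW with hiZ | hiS
          · exact hzy2 i (Finset.mem_filter.1 hiZ).2
          · exact (hFS i hiS).1
        have hFi : Fy i = (a + tapp B y y - y) i := congrFun hFydef i
        simp only [Pi.sub_apply, Pi.add_apply] at hFi
        linarith
      have hmley := subsys_min ha hB (fun i => (hmpos i).le) hmsol hmin W hWcl y hy0 hWsol
      obtain ⟨i0, hi0⟩ := hSne
      have h9 := hmley i0 (Finset.mem_union_right _ hi0)
      have h10 := (hs3mem i0).1 (hSs3 i0 hi0)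
      exact h10 (le_antisymm (hym i0) h9)
  obtain ⟨u3', hu3'0, hu3'⟩ := lemB hA3nn hv3pos hA3v hcl3
  set u3 : Fin n → ℝ := fun i => if i ∈ s3 then u3' i else 0 with hu3def
  have hu3app : ∀ i, u3 i = if i ∈ s3 then u3' i else 0 := fun i => rfl
  clear_value u3
  have hu30 : ∀ i, 0 ≤ u3 i := fun i => by
    rw [hu3app]; split
    · exact hu3'0 i
    · exact le_refl 0
  have hu3key : ∀ i ∈ s3, (Ny *ᵥ u3) i + 1 ≤ u3 i := by
    intro i hi
    have h1 : (Ny *ᵥ u3) i = (A3 *ᵥ u3') i := by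
      rw [mulVec_apply', mulVec_apply']
      apply Finset.sum_congr rfl; intro j _
      by_cases hj : j ∈ s3
      · rw [hu3app, if_pos hj, hA3app, if_pos ⟨hi, hj⟩]
      · rw [hu3app, if_neg hj, hA3app, if_neg (fun hc => hj hc.2), mul_zero, zero_mul]
    rw [h1, hu3app, if_pos hi]
    exact hu3' i
  have hu3Z : ∀ i, y i = m i → (Ny *ᵥ u3) i = 0 := by
    intro i hiy
    rw [mulVec_apply']; apply Finset.sum_eq_zero; intro j _
    by_cases hj : j ∈ s3
    · have hyj : ¬ y j = m j := (hs3mem j).1 hj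
      have hNy0 : Ny i j = 0 := by
        have hl : matL B y i j = 0 := by
          show (∑ k, B i k j * y k) = 0
          apply Finset.sum_eq_zero; intro k _
          rcases eq_or_ne (B i k j) 0 with h | h
          · rw [h, zero_mul]
          · exact absurd ((hzy1 i hiy).2.2.2 k j h).2 hyj
        have hr : matR B y i j = 0 := by
          show (∑ k, B i j k * y k) = 0
          apply Finset.sum_eq_zero; intro k _
          rcases eq_or_ne (B i j k) 0 with h | h
          · rw [h, zero_mul]
          · exact absurd ((hzy1 i hiy).2.2.2 j k h).1 hyj
        rw [hNydef, Matrix.add_apply, hl, hr, add_zero]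
      rw [hNy0, zero_mul]
    · rw [hu3app, if_neg hj, mul_zero]
  -- Composition of the three certificates
  set K1 : ℝ := ∑ i, (Ny *ᵥ u1) i with hK1
  set K2 : ℝ := ∑ i, (Ny *ᵥ u2) i with hK2
  have hNyu1nn : ∀ i, 0 ≤ (Ny *ᵥ u1) i := fun i => mulVec_nonneg' hNynn hu10 i
  have hNyu2nn : ∀ i, 0 ≤ (Ny *ᵥ u2) i := fun i => mulVec_nonneg' hNynn hu20 i
  have hNyu3nn : ∀ i, 0 ≤ (Ny *ᵥ u3) i := fun i => mulVec_nonneg' hNynn hu30 i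
  have hK1nn : 0 ≤ K1 := Finset.sum_nonneg fun i _ => hNyu1nn i
  have hK2nn : 0 ≤ K2 := Finset.sum_nonneg fun i _ => hNyu2nn i
  have hK1le : ∀ i, (Ny *ᵥ u1) i ≤ K1 := fun i =>
    Finset.single_le_sum (f := fun i => (Ny *ᵥ u1) i)
      (fun j _ => hNyu1nn j) (Finset.mem_univ i)
  have hK2le : ∀ i, (Ny *ᵥ u2) i ≤ K2 := fun i =>
    Finset.single_le_sum (f := fun i => (Ny *ᵥ u2) i)
      (fun j _ => hNyu2nn j) (Finset.mem_univ i)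
  set C2 : ℝ := 1 + K1 with hC2
  set C3 : ℝ := 1 + K1 + C2 * K2 with hC3
  have hC2pos : (1:ℝ) ≤ C2 := by rw [hC2]; linarith
  have hC3pos : (0:ℝ) ≤ C3 := by
    rw [hC3]
    have : 0 ≤ C2 * K2 := mul_nonneg (by linarith) hK2nn
    linarith
  set uY : Fin n → ℝ := fun i => u1 i + C2 * u2 i + C3 * u3 i with huY
  have huYapp : ∀ i, uY i = u1 i + C2 * u2 i + C3 * u3 i := fun i => rfl
  clear_value K1 K2 C2 C3 uY
  have huY0 : ∀ i, 0 ≤ uY i := by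
    intro i; rw [huYapp]
    have := mul_nonneg (le_trans zero_le_one hC2pos) (hu20 i)
    have := mul_nonneg hC3pos (hu30 i)
    linarith [hu10 i]
  have hNyuY : ∀ i, (Ny *ᵥ uY) i
      = (Ny *ᵥ u1) i + C2 * (Ny *ᵥ u2) i + C3 * (Ny *ᵥ u3) i := by
    intro i
    simp only [mulVec_apply', huYapp, Finset.mul_sum, ← Finset.sum_add_distrib]
    exact Finset.sum_congr rfl fun j _ => by ring
  refine ⟨hdet, hinvnn, hxy, hym, hFynn, ⟨uY, huY0, ?_⟩⟩
  intro i
  rw [hNyuY i, huYapp]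
  by_cases hix : x i = m i
  · -- old rows : Ny row equals N row
    have h1 : (Ny *ᵥ u1) i = (N *ᵥ u1) i := by
      rw [mulVec_apply', mulVec_apply']
      exact Finset.sum_congr rfl fun j _ => by rw [hrowN i hix j]
    have h2 := hu1 i
    rw [h1, hu2Z i hix, hu3Z i (hyxm i hix)]
    have h3 : 0 ≤ C2 * u2 i := mul_nonneg (by linarith) (hu20 i)
    have h4 : 0 ≤ C3 * u3 i := mul_nonneg hC3pos (hu30 i)
    linarith
  · by_cases hiy : y i = m i
    · -- newly touched rows
      have hi2 : i ∈ s2 := (hs2mem i).2 ⟨hiy, hix⟩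
      have h2 := hu2key i hi2
      have h3 := hK1le i
      rw [hu3Z i hiy]
      have h4 : 0 ≤ C3 * u3 i := mul_nonneg hC3pos (hu30 i)
      have h5 : C2 * ((Ny *ᵥ u2) i + 1) ≤ C2 * u2 i :=
        mul_le_mul_of_nonneg_left h2 (by linarith)
      rw [mul_add, mul_one] at h5
      have h6 : 0 ≤ u1 i := hu10 i
      have hC2eq : C2 = 1 + K1 := hC2
      linarith
    · -- not yet converged rows
      have hi3 : i ∈ s3 := (hs3mem i).2 hiy
      have h2 := hu3key i hi3
      have h3 := hK1le i
      have h4 := hK2le i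
      have h5 : C3 * ((Ny *ᵥ u3) i + 1) ≤ C3 * u3 i :=
        mul_le_mul_of_nonneg_left h2 hC3pos
      rw [mul_add, mul_one] at h5
      have h6 : C2 * (Ny *ᵥ u2) i ≤ C2 * K2 :=
        mul_le_mul_of_nonneg_left h4 (by linarith)
      have h7 : 0 ≤ u1 i := hu10 i
      have h8 : 0 ≤ C2 * u2 i := mul_nonneg (by linarith) (hu20 i)
      have hC3eq : C3 = 1 + K1 + C2 * K2 := hC3
      linarith


end NewtonAux

/-- The Newton iteration started from `0` is well defined, monotonically increasing,
keeps a nonnegative residual, and converges to the minimal nonnegative solution `m`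
of `x = a + Bx²` (part of Theorem `thm.21` in the paper). Here `(Rmat B (x k))⁻¹`
is Mathlib's total matrix inverse; well-definedness is asserted by
`IsUnit (Rmat B (x k)).det` together with nonnegativity of the inverse. -/
theorem newton_iteration_minimal_solution
    {n : ℕ} (a : Fin n → ℝ) (B : Fin n → Fin n → Fin n → ℝ)
    (ha : ∀ i, 0 ≤ a i) (hB : ∀ i j k, 0 ≤ B i j k)
    (m : Fin n → ℝ)
    (hmpos : ∀ i, 0 < m i)
    (hmsol : m = a + tapp B m m)
    (hmin : ∀ x : Fin n → ℝ, (∀ i, 0 ≤ x i) → x = a + tapp B x x → ∀ i, m i ≤ x i)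
    (x : ℕ → (Fin n → ℝ))
    (hx0 : x 0 = 0)
    (hxs : ∀ k, x (k + 1) = x k + (Rmat B (x k))⁻¹ *ᵥ (a + tapp B (x k) (x k) - x k)) :
    (∀ k, IsUnit (Rmat B (x k)).det) ∧
    (∀ k i j, 0 ≤ (Rmat B (x k))⁻¹ i j) ∧
    (∀ k i, 0 ≤ (a + tapp B (x k) (x k) - x k) i) ∧
    (∀ k i, x k i ≤ x (k + 1) i) ∧
    (∀ k i, x k i ≤ m i) ∧
    Filter.Tendsto x Filter.atTop (nhds m) := by
  classical
  have htapp0 : ∀ i, tapp B (x 0) (x 0) i = 0 := by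
    intro i; rw [hx0]
    simp [tapp]
  have hFx0 : ∀ i, 0 ≤ (a + tapp B (x 0) (x 0) - x 0) i := by
    intro i
    simp only [Pi.add_apply, Pi.sub_apply, htapp0 i]
    rw [hx0]
    simpa using ha i
  have hcert0 : ∃ u, (∀ i, 0 ≤ u i) ∧
      ∀ i, ((matL B (x 0) + matR B (x 0)) *ᵥ u) i + 1 ≤ u i := by
    refine ⟨fun _ => 1, fun i => zero_le_one, ?_⟩
    intro i
    have h1 : ((matL B (x 0) + matR B (x 0)) *ᵥ fun _ => (1:ℝ)) i = 0 := by
      rw [mulVec_apply']; apply Finset.sum_eq_zero; intro j _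
      have h2 : (matL B (x 0) + matR B (x 0)) i j = 0 := by
        rw [Matrix.add_apply, hx0]
        show (∑ k, B i k j * (0:ℝ)) + (∑ k, B i j k * (0:ℝ)) = 0
        simp
      rw [h2, zero_mul]
    rw [h1]; norm_num
  have hP : ∀ k, (∀ i, 0 ≤ x k i) ∧ (∀ i, x k i ≤ m i) ∧
      (∀ i, 0 ≤ (a + tapp B (x k) (x k) - x k) i) ∧
      (∃ u, (∀ i, 0 ≤ u i) ∧
        ∀ i, ((matL B (x k) + matR B (x k)) *ᵥ u) i + 1 ≤ u i) := by
    intro k; induction k with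
    | zero =>
        refine ⟨?_, ?_, hFx0, hcert0⟩
        · intro i; rw [hx0]; exact le_refl 0
        · intro i; rw [hx0]; exact (hmpos i).le
    | succ k ih =>
        obtain ⟨h0, h1, h2, h3⟩ := ih
        obtain ⟨-, -, hxy, hym, hFy, hcert⟩ :=
          newton_step ha hB hmpos hmsol hmin h0 h1 h2 h3 (x (k+1)) (hxs k)
        exact ⟨fun i => le_trans (h0 i) (hxy i), hym, hFy, hcert⟩
  have hstep : ∀ k, IsUnit (Rmat B (x k)).det ∧ (∀ i j, 0 ≤ (Rmat B (x k))⁻¹ i j) ∧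
      (∀ i, x k i ≤ x (k+1) i) ∧ (∀ i, x (k+1) i ≤ m i) ∧
      (∀ i, 0 ≤ (a + tapp B (x (k+1)) (x (k+1)) - x (k+1)) i) ∧
      (∃ u, (∀ i, 0 ≤ u i) ∧
        ∀ i, ((matL B (x (k+1)) + matR B (x (k+1))) *ᵥ u) i + 1 ≤ u i) := by
    intro k
    obtain ⟨h0, h1, h2, h3⟩ := hP k
    exact newton_step ha hB hmpos hmsol hmin h0 h1 h2 h3 (x (k+1)) (hxs k)
  refine ⟨fun k => (hstep k).1, fun k => (hstep k).2.1, fun k => (hP k).2.2.1,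
    fun k => (hstep k).2.2.1, fun k => (hP k).2.1, ?_⟩
  -- convergence
  have hmono : ∀ i, Monotone fun k => x k i :=
    fun i => monotone_nat_of_le_succ (fun k => (hstep k).2.2.1 i)
  have hbdd : ∀ i, BddAbove (Set.range fun k => x k i) :=
    fun i => ⟨m i, by rintro _ ⟨k, rfl⟩; exact (hP k).2.1 i⟩
  set L : Fin n → ℝ := fun i => ⨆ k, x k i with hLdef
  have htL : ∀ i, Tendsto (fun k => x k i) atTop (nhds (L i)) :=
    fun i => tendsto_atTop_ciSup (hmono i) (hbdd i)
  have hLm : ∀ i, L i ≤ m i := fun i => ciSup_le fun k => (hP k).2.1 i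
  have hL0 : ∀ i, 0 ≤ L i := fun i => le_trans ((hP 0).1 i) (le_ciSup (hbdd i) 0)
  have hδto : ∀ i, Tendsto (fun k => x (k+1) i - x k i) atTop (nhds 0) := by
    intro i
    have h1 : Tendsto (fun k => x (k+1) i) atTop (nhds (L i)) :=
      (htL i).comp (tendsto_add_atTop_nat 1)
    have h2 := h1.sub (htL i)
    simpa using h2
  have hFeq : ∀ k i, (a + tapp B (x k) (x k) - x k) i
      = (x (k+1) i - x k i)
        - ((matL B (x k) + matR B (x k)) *ᵥ (x (k+1) - x k)) i := by
    intro k i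
    have hδeq : x (k+1) - x k
        = (Rmat B (x k))⁻¹ *ᵥ (a + tapp B (x k) (x k) - x k) := by
      rw [hxs k]; abel
    have hRδ : Rmat B (x k) *ᵥ (x (k+1) - x k)
        = a + tapp B (x k) (x k) - x k := by
      rw [hδeq, Matrix.mulVec_mulVec, Matrix.mul_nonsing_inv _ (hstep k).1,
        Matrix.one_mulVec]
    have h3 := congrFun hRδ i
    rw [Rmat_eq, Matrix.sub_mulVec, Matrix.one_mulVec] at h3
    simp only [Pi.sub_apply] at h3 ⊢
    linarith
  have hNto0 : ∀ i, Tendsto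
      (fun k => ((matL B (x k) + matR B (x k)) *ᵥ (x (k+1) - x k)) i) atTop (nhds 0) := by
    intro i
    have h4 : ∀ k, ((matL B (x k) + matR B (x k)) *ᵥ (x (k+1) - x k)) i
        = ∑ j, ((∑ t, B i t j * x k t) + ∑ t, B i j t * x k t) * (x (k+1) j - x k j) := by
      intro k
      rw [mulVec_apply']
      apply Finset.sum_congr rfl; intro j _
      have h5 : (matL B (x k) + matR B (x k)) i j
          = (∑ t, B i t j * x k t) + ∑ t, B i j t * x k t := rfl
      rw [h5]; rfl
    simp only [h4]
    have h6 : Tendsto (fun k : ℕ => ∑ j : Fin n,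
        ((∑ t, B i t j * x k t) + ∑ t, B i j t * x k t) * (x (k+1) j - x k j)) atTop
        (nhds (∑ j : Fin n, (0:ℝ))) := by
      apply tendsto_finset_sum
      intro j _
      have h7 : Tendsto (fun k => (∑ t, B i t j * x k t) + ∑ t, B i j t * x k t) atTop
          (nhds ((∑ t, B i t j * L t) + ∑ t, B i j t * L t)) := by
        apply Tendsto.add
        · exact tendsto_finset_sum _ fun t _ => tendsto_const_nhds.mul (htL t)
        · exact tendsto_finset_sum _ fun t _ => tendsto_const_nhds.mul (htL t)
      have h8 := h7.mul (hδto j)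
      simpa using h8
    simpa using h6
  have hFto0 : ∀ i, Tendsto (fun k => (a + tapp B (x k) (x k) - x k) i) atTop (nhds 0) := by
    intro i
    have h9 : Tendsto (fun k => (x (k+1) i - x k i)
        - ((matL B (x k) + matR B (x k)) *ᵥ (x (k+1) - x k)) i) atTop (nhds 0) := by
      have := (hδto i).sub (hNto0 i)
      simpa using this
    have h10 : (fun k => (a + tapp B (x k) (x k) - x k) i)
        = fun k => (x (k+1) i - x k i)
          - ((matL B (x k) + matR B (x k)) *ᵥ (x (k+1) - x k)) i := by
      funext k; exact hFeq k i
    rw [h10]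
    exact h9
  have hFtoL : ∀ i, Tendsto (fun k => (a + tapp B (x k) (x k) - x k) i) atTop
      (nhds ((a + tapp B L L - L) i)) := by
    intro i
    simp only [Pi.add_apply, Pi.sub_apply]
    apply Tendsto.sub _ (htL i)
    apply Tendsto.add tendsto_const_nhds
    apply tendsto_finset_sum; intro j _
    apply tendsto_finset_sum; intro l _
    exact (tendsto_const_nhds.mul (htL j)).mul (htL l)
  have hFL0 : ∀ i, (a + tapp B L L - L) i = 0 :=
    fun i => tendsto_nhds_unique (hFtoL i) (hFto0 i)
  have hLsol : L = a + tapp B L L := by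
    funext i
    have := hFL0 i
    simp only [Pi.sub_apply, Pi.add_apply] at this ⊢
    linarith
  have hmL := hmin L hL0 hLsol
  have hLm' : L = m := funext fun i => le_antisymm (hLm i) (hmL i)
  rw [← hLm']
  exact tendsto_pi_nhds.2 fun i => htL i
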